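/- Let p be an HV-convex polyomino. Suppose (a,b) ∈ Z^2 is such that no cell of p lies strictly west of column a on row b (i.e., for all s < a, (s,b) ∉ p) but some cell (a', b') ∈ p satisfies a' < a and b' > b. Then no cell (x'',y'') of p satisfies x'' < a and y'' < b. -/

import Mathlib

def Adj (a b : ℤ × ℤ) : Prop := (a.1 - b.1).natAbs + (a.2 - b.2).natAbs = 1

def FourConnected (p : Set (ℤ × ℤ)) : Prop :=
  ∀ c1 ∈ p, ∀ c2 ∈ p, ∃ l : List (ℤ × ℤ),
    l.head? = some c1 ∧ l.getLast? = some c2 ∧ (∀ c ∈ l, c ∈ p) ∧ l.Chain' Adj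

def HConvex (p : Set (ℤ × ℤ)) : Prop :=
  ∀ x1 x2 x3 y : ℤ, x1 ≤ x2 → x2 ≤ x3 → (x1, y) ∈ p → (x3, y) ∈ p → (x2, y) ∈ p

def VConvex (p : Set (ℤ × ℤ)) : Prop :=
  ∀ x y1 y2 y3 : ℤ, y1 ≤ y2 → y2 ≤ y3 → (x, y1) ∈ p → (x, y3) ∈ p → (x, y2) ∈ p

def HSeg (p : Set (ℤ × ℤ)) (x1 x2 y : ℤ) : Prop :=
  ∀ x : ℤ, min x1 x2 ≤ x → x ≤ max x1 x2 → (x, y) ∈ p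

def VSeg (p : Set (ℤ × ℤ)) (x y1 y2 : ℤ) : Prop :=
  ∀ y : ℤ, min y1 y2 ≤ y → y ≤ max y1 y2 → (x, y) ∈ p

/-- An inner path from `c1` to `c2` changing direction at most once:
either a horizontal segment followed by a vertical one, or vice versa,
entirely contained in `p`. -/
def LPath (p : Set (ℤ × ℤ)) (c1 c2 : ℤ × ℤ) : Prop :=
  (HSeg p c1.1 c2.1 c1.2 ∧ VSeg p c2.1 c1.2 c2.2) ∨
  (VSeg p c1.1 c1.2 c2.2 ∧ HSeg p c1.1 c2.1 c2.2)

def LConvex (p : Set (ℤ × ℤ)) : Prop := ∀ c1 ∈ p, ∀ c2 ∈ p, LPath p c1 c2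

def NECorner (p : Set (ℤ × ℤ)) (x y : ℤ) : Prop :=
  (x, y) ∈ p ∧ (x + 1, y) ∉ p ∧ (x, y + 1) ∉ p

def NWCorner (p : Set (ℤ × ℤ)) (x y : ℤ) : Prop :=
  (x, y) ∈ p ∧ (x - 1, y) ∉ p ∧ (x, y + 1) ∉ p

def Corner (p : Set (ℤ × ℤ)) (x y : ℤ) : Prop :=
  (x, y) ∈ p ∧
    (((x, y + 1) ∉ p ∧ (x + 1, y) ∉ p) ∨ ((x + 1, y) ∉ p ∧ (x, y - 1) ∉ p) ∨
      ((x, y - 1) ∉ p ∧ (x - 1, y) ∉ p) ∨ ((x - 1, y) ∉ p ∧ (x, y + 1) ∉ p))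

lemma auxB (p : Set (ℤ × ℤ)) (a b : ℤ) (hrow : ∀ s : ℤ, s < a → (s, b) ∉ p) :
    ∀ l : List (ℤ × ℤ), l.Chain' Adj → (∀ c ∈ l, c ∈ p) → ∀ u v : ℤ × ℤ,
      l.head? = some u → l.getLast? = some v → u.1 < a → u.2 < b → b ≤ v.2 →
      ∃ c ∈ p, c.1 = a - 1 ∧ c.2 < b := by
  intro l
  induction l with
  | nil => intro _ _ u v h; simp at h
  | cons w t ih =>
    intro hchain hmem u v hhead hlast hu1 hu2 hv2
    simp only [List.head?_cons, Option.some.injEq] at hhead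
    subst hhead
    match t with
    | [] =>
      simp only [List.getLast?_singleton, Option.some.injEq] at hlast
      subst hlast; omega
    | w2 :: t2 =>
      have hadj : Adj w w2 := (List.isChain_cons_cons.mp hchain).1
      have hchain2 := (List.isChain_cons_cons.mp hchain).2
      have hlast2 : (w2 :: t2).getLast? = some v := by
        rw [← hlast]; simp [List.getLast?_cons_cons]
      have hmem2 : ∀ c ∈ w2 :: t2, c ∈ p := fun c hc => hmem c (List.mem_cons_of_mem _ hc)
      unfold Adj at hadj
      by_cases hy : w2.2 ≥ b
      · -- the step crosses row b while still at column u.1 < a : contradiction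
        have h1 : w2.2 = b ∧ w2.1 = w.1 := by omega
        have : (w2.1, b) ∈ p := by
          have := hmem2 w2 (List.mem_cons_self)
          rwa [show ((w2.1 : ℤ), b) = w2 from Prod.ext rfl h1.1.symm]
        exact absurd this (hrow w2.1 (by omega))
      · by_cases hx : w2.1 ≥ a
        · -- stepped from column a-1 to column a below row b
          refine ⟨w, hmem w (List.mem_cons_self), by omega, hu2⟩
        · exact ih hchain2 hmem2 w2 v rfl hlast2 (by omega) (by omega) hv2

lemma auxB' (p : Set (ℤ × ℤ)) (a b : ℤ) (hrow : ∀ s : ℤ, s < a → (s, b) ∉ p) :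
    ∀ l : List (ℤ × ℤ), l.Chain' Adj → (∀ c ∈ l, c ∈ p) → ∀ u v : ℤ × ℤ,
      l.head? = some u → l.getLast? = some v → u.1 < a → b < u.2 → v.2 ≤ b →
      ∃ c ∈ p, c.1 = a - 1 ∧ b < c.2 := by
  intro l
  induction l with
  | nil => intro _ _ u v h; simp at h
  | cons w t ih =>
    intro hchain hmem u v hhead hlast hu1 hu2 hv2
    simp only [List.head?_cons, Option.some.injEq] at hhead
    subst hhead
    match t with
    | [] =>
      simp only [List.getLast?_singleton, Option.some.injEq] at hlast
      subst hlast; omega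
    | w2 :: t2 =>
      have hadj : Adj w w2 := (List.isChain_cons_cons.mp hchain).1
      have hchain2 := (List.isChain_cons_cons.mp hchain).2
      have hlast2 : (w2 :: t2).getLast? = some v := by
        rw [← hlast]; simp [List.getLast?_cons_cons]
      have hmem2 : ∀ c ∈ w2 :: t2, c ∈ p := fun c hc => hmem c (List.mem_cons_of_mem _ hc)
      unfold Adj at hadj
      by_cases hy : w2.2 ≤ b
      · have h1 : w2.2 = b ∧ w2.1 = w.1 := by omega
        have : (w2.1, b) ∈ p := by
          have := hmem2 w2 (List.mem_cons_self)
          rwa [show ((w2.1 : ℤ), b) = w2 from Prod.ext rfl h1.1.symm]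
        exact absurd this (hrow w2.1 (by omega))
      · by_cases hx : w2.1 ≥ a
        · refine ⟨w, hmem w (List.mem_cons_self), by omega, hu2⟩
        · exact ih hchain2 hmem2 w2 v rfl hlast2 (by omega) (by omega) hv2

/-- if no cell of `p` lies due west of `(a, b)` on row `b`, but some cell of
`p` lies strictly north-west of `(a, b)`, then the south-west quadrant of `(a, b)` is
disjoint from `p`. -/
theorem southwest_quadrant_empty (p : Set (ℤ × ℤ)) (hfin : p.Finite) (hne : p.Nonempty)
    (hconn : FourConnected p) (hH : HConvex p) (hV : VConvex p)
    (a b a' b' : ℤ) (hrow : ∀ s : ℤ, s < a → (s, b) ∉ p)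
    (hcell : (a', b') ∈ p) (ha : a' < a) (hb : b < b') :
    ∀ x'' y'' : ℤ, (x'', y'') ∈ p → ¬(x'' < a ∧ y'' < b) := by
  rintro x'' y'' hmem ⟨hx, hy⟩
  obtain ⟨l1, h1h, h1l, h1m, h1c⟩ := hconn (x'', y'') hmem (a', b') hcell
  obtain ⟨c1, hc1p, hc1x, hc1y⟩ :=
    auxB p a b hrow l1 h1c h1m (x'', y'') (a', b') h1h h1l hx hy (le_of_lt hb)
  obtain ⟨l2, h2h, h2l, h2m, h2c⟩ := hconn (a', b') hcell (x'', y'') hmem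
  obtain ⟨c2, hc2p, hc2x, hc2y⟩ :=
    auxB' p a b hrow l2 h2c h2m (a', b') (x'', y'') h2h h2l ha hb (le_of_lt hy)
  have h1 : (a - 1, c1.2) ∈ p := by rwa [show ((a - 1 : ℤ), c1.2) = c1 from Prod.ext hc1x.symm rfl]
  have h2 : (a - 1, c2.2) ∈ p := by rwa [show ((a - 1 : ℤ), c2.2) = c2 from Prod.ext hc2x.symm rfl]
  exact hrow (a - 1) (by omega) (hV (a - 1) c1.2 b c2.2 (le_of_lt hc1y) (le_of_lt hc2y) h1 h2)
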